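/- Let δ : E × E → E be continuously differentiable and let ω⋆ ∈ E satisfy δ(ω⋆, ω⋆) = 0. Let ω̄₀⋆ := ω̄₀ ∈ E be given and let the sequence (ω̄_l⋆) of fitted policy evaluation iterates satisfy δ(ω̄_{l+1}⋆, ω̄_l⋆) = 0 for every l ≥ 0. Assume that for every i the continuous linear map H̄(ω̄_{i+1}⋆, ω⋆; ω̄_i⋆) is invertible. Then for every l ≥ 0, ω̄_l⋆ − ω⋆ = (A_{l−1} ∘ A_{l−2} ∘ ⋯ ∘ A_0)(ω̄₀ − ω⋆), where A_i := H̄(ω̄_{i+1}⋆, ω⋆; ω̄_i⋆)⁻¹ ∘ J̄_δ(ω̄_i⋆, ω⋆; ω⋆). -/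

import Mathlib

open MeasureTheory intervalIntegral

noncomputable section

abbrev E (n : ℕ) := EuclideanSpace ℝ (Fin n)

/-- Partial Fréchet derivative of `δ` w.r.t. its first argument. -/
noncomputable def D1 {n : ℕ} (δ : E n × E n → E n) (a b : E n) : E n →L[ℝ] E n :=
  fderiv ℝ (fun x => δ (x, b)) a

/-- Partial Fréchet derivative of `δ` w.r.t. its second argument. -/
noncomputable def D2 {n : ℕ} (δ : E n × E n → E n) (a b : E n) : E n →L[ℝ] E n :=
  fderiv ℝ (fun y => δ (a, y)) b

/-- Path-mean Hessian `H̄(ω, ω⋆; ω̄) = −∫₀¹ D₁δ(ω − t(ω − ω⋆), ω̄) dt`. -/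
noncomputable def Hbar {n : ℕ} (δ : E n × E n → E n) (ω ωs ωbar : E n) : E n →L[ℝ] E n :=
  -∫ t in (0:ℝ)..1, D1 δ (ω - t • (ω - ωs)) ωbar

/-- Path-mean target Jacobian `J̄_δ(ω, ω⋆; ω̄) = ∫₀¹ D₂δ(ω̄, ω − t(ω − ω⋆)) dt`. -/
noncomputable def Jbar {n : ℕ} (δ : E n × E n → E n) (ω ωs ωbar : E n) : E n →L[ℝ] E n :=
  ∫ t in (0:ℝ)..1, D2 δ ωbar (ω - t • (ω - ωs))

section aux

variable {n : ℕ} {δ : E n × E n → E n}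

private lemma D1_eq (hδ : ContDiff ℝ 1 δ) (a b : E n) :
    D1 δ a b = (fderiv ℝ δ (a, b)).comp (ContinuousLinearMap.inl ℝ (E n) (E n)) := by
  have h : HasFDerivAt (fun x : E n => δ (x, b))
      ((fderiv ℝ δ (a, b)).comp (ContinuousLinearMap.inl ℝ (E n) (E n))) a :=
    ((hδ.differentiable one_ne_zero (a, b)).hasFDerivAt).comp a
      ((hasFDerivAt_id a).prodMk (hasFDerivAt_const b a))
  exact h.fderiv

private lemma D2_eq (hδ : ContDiff ℝ 1 δ) (a b : E n) :
    D2 δ a b = (fderiv ℝ δ (a, b)).comp (ContinuousLinearMap.inr ℝ (E n) (E n)) := by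
  have h : HasFDerivAt (fun y : E n => δ (a, y))
      ((fderiv ℝ δ (a, b)).comp (ContinuousLinearMap.inr ℝ (E n) (E n))) b :=
    ((hδ.differentiable one_ne_zero (a, b)).hasFDerivAt).comp b
      ((hasFDerivAt_const a b).prodMk (hasFDerivAt_id b))
  exact h.fderiv

private lemma clm_intervalIntegral_apply {φ : ℝ → (E n →L[ℝ] E n)}
    (hφ : IntervalIntegrable φ volume 0 1) (v : E n) :
    (∫ t in (0:ℝ)..1, φ t) v = ∫ t in (0:ℝ)..1, φ t v := by
  rw [intervalIntegral.integral_of_le zero_le_one,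
    intervalIntegral.integral_of_le zero_le_one,
    ContinuousLinearMap.integral_apply hφ.1]

private lemma path_cont (u v : E n) : Continuous fun t : ℝ => u - t • (u - v) :=
  continuous_const.sub (continuous_id.smul continuous_const)

private lemma key1 (hδ : ContDiff ℝ 1 δ) (a b c : E n) :
    δ (a, c) - δ (b, c) = (∫ t in (0:ℝ)..1, D1 δ (a - t • (a - b)) c) (a - b) := by
  have hc : Continuous (fderiv ℝ δ) := hδ.continuous_fderiv one_ne_zero
  have hcont : Continuous fun t : ℝ => D1 δ (a - t • (a - b)) c := by
    simp only [D1_eq hδ]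
    exact (hc.comp ((path_cont a b).prodMk continuous_const)).clm_comp continuous_const
  have hg : ∀ t ∈ Set.uIcc (0:ℝ) 1, HasDerivAt (fun t : ℝ => δ (a - t • (a - b), c))
      (D1 δ (a - t • (a - b)) c (-(a - b))) t := by
    intro t _
    have hpath : HasDerivAt (fun t : ℝ => a - t • (a - b)) (-(a - b)) t := by
      simpa using ((hasDerivAt_id t).smul_const (a - b)).const_sub a
    have h1 : HasDerivAt (fun t : ℝ => (a - t • (a - b), c)) (-(a - b), (0 : E n)) t :=
      hpath.prodMk (hasDerivAt_const t c)
    have h2 := ((hδ.differentiable one_ne_zero _).hasFDerivAt).comp_hasDerivAt t h1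
    rw [D1_eq hδ]
    simpa [Function.comp_def] using h2
  have hInt : IntervalIntegrable (fun t : ℝ => D1 δ (a - t • (a - b)) c (-(a - b)))
      volume 0 1 :=
    (hcont.clm_apply continuous_const).intervalIntegrable 0 1
  have hftc := intervalIntegral.integral_eq_sub_of_hasDerivAt hg hInt
  have heval : (∫ t in (0:ℝ)..1, D1 δ (a - t • (a - b)) c) (a - b)
      = ∫ t in (0:ℝ)..1, D1 δ (a - t • (a - b)) c (a - b) :=
    clm_intervalIntegral_apply (hcont.intervalIntegrable 0 1) (a - b)
  have : ∫ t in (0:ℝ)..1, D1 δ (a - t • (a - b)) c (-(a - b))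
      = -∫ t in (0:ℝ)..1, D1 δ (a - t • (a - b)) c (a - b) := by
    rw [← intervalIntegral.integral_neg]
    simp
  rw [this] at hftc
  simp only [one_smul, zero_smul, sub_sub_cancel, sub_zero] at hftc
  rw [heval, ← neg_eq_iff_eq_neg.mpr hftc.symm, neg_sub]

private lemma key2 (hδ : ContDiff ℝ 1 δ) (a b c : E n) :
    δ (c, a) - δ (c, b) = (∫ t in (0:ℝ)..1, D2 δ c (a - t • (a - b))) (a - b) := by
  have hc : Continuous (fderiv ℝ δ) := hδ.continuous_fderiv one_ne_zero
  have hcont : Continuous fun t : ℝ => D2 δ c (a - t • (a - b)) := by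
    simp only [D2_eq hδ]
    exact (hc.comp (continuous_const.prodMk (path_cont a b))).clm_comp continuous_const
  have hg : ∀ t ∈ Set.uIcc (0:ℝ) 1, HasDerivAt (fun t : ℝ => δ (c, a - t • (a - b)))
      (D2 δ c (a - t • (a - b)) (-(a - b))) t := by
    intro t _
    have hpath : HasDerivAt (fun t : ℝ => a - t • (a - b)) (-(a - b)) t := by
      simpa using ((hasDerivAt_id t).smul_const (a - b)).const_sub a
    have h1 : HasDerivAt (fun t : ℝ => (c, a - t • (a - b))) ((0 : E n), -(a - b)) t :=
      (hasDerivAt_const t c).prodMk hpath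
    have h2 := ((hδ.differentiable one_ne_zero _).hasFDerivAt).comp_hasDerivAt t h1
    rw [D2_eq hδ]
    simpa [Function.comp_def] using h2
  have hInt : IntervalIntegrable (fun t : ℝ => D2 δ c (a - t • (a - b)) (-(a - b)))
      volume 0 1 :=
    (hcont.clm_apply continuous_const).intervalIntegrable 0 1
  have hftc := intervalIntegral.integral_eq_sub_of_hasDerivAt hg hInt
  have heval : (∫ t in (0:ℝ)..1, D2 δ c (a - t • (a - b))) (a - b)
      = ∫ t in (0:ℝ)..1, D2 δ c (a - t • (a - b)) (a - b) :=
    clm_intervalIntegral_apply (hcont.intervalIntegrable 0 1) (a - b)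
  have : ∫ t in (0:ℝ)..1, D2 δ c (a - t • (a - b)) (-(a - b))
      = -∫ t in (0:ℝ)..1, D2 δ c (a - t • (a - b)) (a - b) := by
    rw [← intervalIntegral.integral_neg]
    simp
  rw [this] at hftc
  simp only [one_smul, zero_smul, sub_sub_cancel, sub_zero] at hftc
  rw [heval, ← neg_eq_iff_eq_neg.mpr hftc.symm, neg_sub]

end aux

/-- Theorem 1 of the paper: the fitted policy evaluation iterates
`ω̄_l⋆` (with `δ(ω̄_{l+1}⋆, ω̄_l⋆) = 0` and `ω̄₀⋆ = ω̄₀`) satisfy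
`ω̄_l⋆ − ω⋆ = (A_{l−1} ∘ ⋯ ∘ A_0)(ω̄₀ − ω⋆)` where
`A_i = H̄(ω̄_{i+1}⋆, ω⋆; ω̄_i⋆)⁻¹ ∘ J̄_δ(ω̄_i⋆, ω⋆; ω⋆)`, the inverses being provided by
continuous linear equivalences `Φ i` whose underlying maps agree with `H̄(ω̄_{i+1}⋆, ω⋆; ω̄_i⋆)`. -/
theorem fpe_iterates {n : ℕ} (δ : E n × E n → E n) (hδ : ContDiff ℝ 1 δ)
    (ωs ω0 : E n) (hfix : δ (ωs, ωs) = 0)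
    (ωb : ℕ → E n) (hω0 : ωb 0 = ω0)
    (hfit : ∀ l : ℕ, δ (ωb (l + 1), ωb l) = 0)
    (Φ : ℕ → (E n ≃L[ℝ] E n))
    (hΦ : ∀ i : ℕ, ((Φ i : E n →L[ℝ] E n)) = Hbar δ (ωb (i + 1)) ωs (ωb i)) :
    ∀ l : ℕ,
      ωb l - ωs =
        (List.range l).foldl
          (fun v i => (Φ i).symm (Jbar δ (ωb i) ωs ωs v)) (ω0 - ωs) := by
  intro l
  induction l with
  | zero => simp [hω0]
  | succ l ih =>
    rw [List.range_succ, List.foldl_append, ← ih]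
    simp only [List.foldl_cons, List.foldl_nil]
    have hstep : (Φ l : E n →L[ℝ] E n) (ωb (l + 1) - ωs)
        = Jbar δ (ωb l) ωs ωs (ωb l - ωs) := by
      rw [hΦ l]
      have h1 := key1 hδ (ωb (l + 1)) ωs (ωb l)
      have h2 := key2 hδ (ωb l) ωs ωs
      rw [hfit l, hfix, zero_sub, sub_zero] at *
      have : Hbar δ (ωb (l + 1)) ωs (ωb l) (ωb (l + 1) - ωs)
          = -((∫ t in (0:ℝ)..1, D1 δ (ωb (l + 1) - t • (ωb (l + 1) - ωs)) (ωb l))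
              (ωb (l + 1) - ωs)) := by
        simp [Hbar]
      rw [this, ← h1, neg_neg, h2]; rfl
    simpa using congrArg (Φ l).symm hstep

end
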